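/- (Hilbert's fourth problem, constant curvature −1.) Let Ω = {x ∈ ℝⁿ : |x| < 1}, P(x,y) = ⟨x,y⟩/(1−|x|²), and consider the projectively flat spray G^i = P y^i on Ω × (ℝⁿ∖{0}), with N^j_i = ∂G^j/∂y^i. Let F²(x,y) = (|y|²(1−|x|²) + ⟨x,y⟩²)/(1−|x|²)² (the squared Klein metric). Then: (1) the Ricci scalar satisfies ρ := P² − S₀P = −F², where S₀P = Σ_k y^k ∂P/∂x^k; (2) d_hF² = 0, i.e. ∂F²/∂x^i = Σ_j N^j_i ∂F²/∂y^j for all i. Hence the spray is the geodesic spray of the Klein metric, of constant flag curvature κ = ρ/F² = −1. -/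

import Mathlib

open Real Finset

/-- Partial derivative with respect to the base coordinate `x^i`. -/
noncomputable def pdx {n : ℕ} (f : ((Fin n → ℝ) × (Fin n → ℝ)) → ℝ) (i : Fin n)
    (p : (Fin n → ℝ) × (Fin n → ℝ)) : ℝ :=
  fderiv ℝ f p (Pi.single i 1, 0)

/-- Partial derivative with respect to the fibre coordinate `y^i`. -/
noncomputable def pdy {n : ℕ} (f : ((Fin n → ℝ) × (Fin n → ℝ)) → ℝ) (i : Fin n)
    (p : (Fin n → ℝ) × (Fin n → ℝ)) : ℝ :=
  fderiv ℝ f p (0, Pi.single i 1)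

/-- Partial derivative of a function on the base with respect to `x^i`. -/
noncomputable def pdb {n : ℕ} (f : (Fin n → ℝ) → ℝ) (i : Fin n) (x : Fin n → ℝ) : ℝ :=
  fderiv ℝ f x (Pi.single i 1)

/-- Partial derivative with respect to the full coordinates `(x, y)` of `ℝ²ⁿ`,
indexed by `Fin n ⊕ Fin n` (`inl` = base directions, `inr` = fibre directions). -/
noncomputable def pdz {n : ℕ} (f : ((Fin n → ℝ) × (Fin n → ℝ)) → ℝ) (a : Fin n ⊕ Fin n)
    (p : (Fin n → ℝ) × (Fin n → ℝ)) : ℝ :=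
  match a with
  | Sum.inl i => pdx f i p
  | Sum.inr i => pdy f i p

/-- The spray vector field `S = yᵏ ∂/∂xᵏ - 2Gᵏ ∂/∂yᵏ` applied to a function. -/
noncomputable def sprayOp {n : ℕ} (G : Fin n → ((Fin n → ℝ) × (Fin n → ℝ)) → ℝ)
    (f : ((Fin n → ℝ) × (Fin n → ℝ)) → ℝ) (p : (Fin n → ℝ) × (Fin n → ℝ)) : ℝ :=
  ∑ k, (p.2 k * pdx f k p - 2 * G k p * pdy f k p)

/-- The flat spray `S₀ = yᵏ ∂/∂xᵏ` applied to a function. -/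
noncomputable def flatOp {n : ℕ} (f : ((Fin n → ℝ) × (Fin n → ℝ)) → ℝ)
    (p : (Fin n → ℝ) × (Fin n → ℝ)) : ℝ :=
  ∑ k, p.2 k * pdx f k p

/-- The coefficients `N^i_j = ∂G^i/∂y^j` of the nonlinear connection. -/
noncomputable def Ncon {n : ℕ} (G : Fin n → ((Fin n → ℝ) × (Fin n → ℝ)) → ℝ)
    (i j : Fin n) : ((Fin n → ℝ) × (Fin n → ℝ)) → ℝ :=
  fun p => pdy (G i) j p

/-- The components `R^i_j = 2 ∂G^i/∂x^j - S(N^i_j) - N^i_k N^k_j` of the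
Jacobi endomorphism. -/
noncomputable def jacobiR {n : ℕ} (G : Fin n → ((Fin n → ℝ) × (Fin n → ℝ)) → ℝ)
    (i j : Fin n) (p : (Fin n → ℝ) × (Fin n → ℝ)) : ℝ :=
  2 * pdx (G i) j p - sprayOp G (Ncon G i j) p - ∑ k, Ncon G i k p * Ncon G k j p

/-- The domain `Ω × (ℝⁿ ∖ {0})`. -/
def sprayDom {n : ℕ} (Ω : Set (Fin n → ℝ)) : Set ((Fin n → ℝ) × (Fin n → ℝ)) :=
  Ω ×ˢ {y | y ≠ 0}

/-- Squared Euclidean norm `|v|²` on `ℝⁿ`. -/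
def nsq {n : ℕ} (v : Fin n → ℝ) : ℝ := ∑ i, v i ^ 2

/-- Euclidean inner product `⟨v, w⟩` on `ℝⁿ`. -/
def dotp {n : ℕ} (v w : Fin n → ℝ) : ℝ := ∑ i, v i * w i


abbrev EE (n : ℕ) := (Fin n → ℝ) × (Fin n → ℝ)

noncomputable def cxm (n : ℕ) (i : Fin n) : EE n →L[ℝ] ℝ :=
  (ContinuousLinearMap.proj i).comp (ContinuousLinearMap.fst ℝ (Fin n → ℝ) (Fin n → ℝ))
noncomputable def cym (n : ℕ) (i : Fin n) : EE n →L[ℝ] ℝ :=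
  (ContinuousLinearMap.proj i).comp (ContinuousLinearMap.snd ℝ (Fin n → ℝ) (Fin n → ℝ))

@[simp] lemma cxm_apply (n : ℕ) (i : Fin n) (v : EE n) : cxm n i v = v.1 i := rfl
@[simp] lemma cym_apply (n : ℕ) (i : Fin n) (v : EE n) : cym n i v = v.2 i := rfl

lemma hasB (n : ℕ) (p : EE n) :
    HasFDerivAt (fun q : EE n => dotp q.1 q.2)
      (∑ k, (p.1 k • cym n k + p.2 k • cxm n k)) p := by
  simp only [dotp]
  exact HasFDerivAt.fun_sum fun k _ => (cxm n k).hasFDerivAt.mul (cym n k).hasFDerivAt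

lemma hasA (n : ℕ) (p : EE n) :
    HasFDerivAt (fun q : EE n => nsq q.1)
      (∑ k, (p.1 k • cxm n k + p.1 k • cxm n k)) p := by
  simp only [nsq, pow_two]
  exact HasFDerivAt.fun_sum fun k _ => (cxm n k).hasFDerivAt.mul (cxm n k).hasFDerivAt

lemma hasC (n : ℕ) (p : EE n) :
    HasFDerivAt (fun q : EE n => nsq q.2)
      (∑ k, (p.2 k • cym n k + p.2 k • cym n k)) p := by
  simp only [nsq, pow_two]
  exact HasFDerivAt.fun_sum fun k _ => (cym n k).hasFDerivAt.mul (cym n k).hasFDerivAt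

lemma hdivR {E : Type*} [NormedAddCommGroup E] [NormedSpace ℝ E] {c d : E → ℝ}
    {c' d' : E →L[ℝ] ℝ} {x : E} (hc : HasFDerivAt c c' x) (hd : HasFDerivAt d d' x)
    (hx : d x ≠ 0) :
    HasFDerivAt (fun y => c y / d y) ((d x)⁻¹ • c' + (-(c x) / d x ^ 2) • d') x := by
  have h1 : HasFDerivAt (fun y => (d y)⁻¹) ((-(d x ^ 2)⁻¹) • d') x := by
    have h := (hasFDerivAt_inv (𝕜 := ℝ) hx).comp x hd
    refine h.congr_fderiv ?_
    ext v
    simp [ContinuousLinearMap.smulRight_apply]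
    ring
  have h2 := hc.fun_mul h1
  simp only [div_eq_mul_inv]
  refine h2.congr_fderiv ?_
  ext v
  simp
  ring


private lemma hterm_aux {n : ℕ} (x y : Fin n → ℝ) (A B : ℝ) (hA : A ≠ 0)
    (i j : Fin n) :
    (B / A * (if j = i then 1 else 0) + y j * (x i / A)) *
      ((2 * y j * A + 2 * B * x j) / A ^ 2)
    = (if j = i then B / A * ((2 * y i * A + 2 * B * x i) / A ^ 2) else 0)
      + (y j ^ 2 * (2 * x i / A ^ 2) + x j * y j * (2 * B * x i / A ^ 3)) := by
  rcases eq_or_ne j i with h | h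
  · subst h
    simp only [if_true]
    field_simp
  · simp only [h, if_false]
    field_simp
    ring

set_option maxHeartbeats 1000000 in
/-- Hilbert's fourth problem, constant curvature `-1`. For
`P(x,y) = ⟨x,y⟩/(1-|x|²)` on the unit ball and `G^i = P y^i`, the squared Klein
metric `F²(x,y) = (|y|²(1-|x|²) + ⟨x,y⟩²)/(1-|x|²)²` satisfies
`ρ = P² - S₀P = -F²` and `d_hF² = 0`; hence the spray is the geodesic spray of
the Klein metric, of constant flag curvature `κ = ρ/F² = -1`. -/
theorem hilbert_fourth_klein
    (n : ℕ)
    (P Fsq : ((Fin n → ℝ) × (Fin n → ℝ)) → ℝ)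
    (hP : ∀ p, P p = dotp p.1 p.2 / (1 - nsq p.1))
    (hFsq : ∀ p, Fsq p =
      (nsq p.2 * (1 - nsq p.1) + dotp p.1 p.2 ^ 2) / (1 - nsq p.1) ^ 2)
    (G : Fin n → ((Fin n → ℝ) × (Fin n → ℝ)) → ℝ)
    (hGdef : ∀ i p, G i p = P p * p.2 i) :
    ∀ p ∈ sprayDom {x : Fin n → ℝ | nsq x < 1},
      P p ^ 2 - flatOp P p = -Fsq p ∧
      (∀ i, pdx Fsq i p = ∑ j, Ncon G j i p * pdy Fsq j p) := by
  intro p hp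
  have hx1 : nsq p.1 < 1 := hp.1
  have hA : (1 : ℝ) - nsq p.1 ≠ 0 := by
    have : (0:ℝ) < 1 - nsq p.1 := by linarith
    exact ne_of_gt this
  have hPe : P = fun q : (Fin n → ℝ) × (Fin n → ℝ) => dotp q.1 q.2 / (1 - nsq q.1) :=
    funext hP
  subst hPe
  have hFe : Fsq = fun q : (Fin n → ℝ) × (Fin n → ℝ) =>
      (nsq q.2 * (1 - nsq q.1) + dotp q.1 q.2 ^ 2) / (1 - nsq q.1) ^ 2 := funext hFsq
  subst hFe
  have hGe : G = fun i (q : (Fin n → ℝ) × (Fin n → ℝ)) =>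
      dotp q.1 q.2 / (1 - nsq q.1) * q.2 i := by
    funext i q
    exact hGdef i q
  subst hGe
  -- derivatives of the basic functions at p
  have hAd : HasFDerivAt (fun q : EE n => 1 - nsq q.1)
      ((0 : EE n →L[ℝ] ℝ) - ∑ k, (p.1 k • cxm n k + p.1 k • cxm n k)) p :=
    (hasFDerivAt_const (1:ℝ) p).sub (hasA n p)
  have hPd := hdivR (hasB n p) hAd hA
  have hDd : HasFDerivAt (fun q : EE n => (1 - nsq q.1) ^ 2)
      ((1 - nsq p.1) • ((0 : EE n →L[ℝ] ℝ) - ∑ k, (p.1 k • cxm n k + p.1 k • cxm n k)) +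
        (1 - nsq p.1) • ((0 : EE n →L[ℝ] ℝ) - ∑ k, (p.1 k • cxm n k + p.1 k • cxm n k))) p := by
    simp only [pow_two]
    exact hAd.mul hAd
  have hNd : HasFDerivAt (fun q : EE n => nsq q.2 * (1 - nsq q.1) + dotp q.1 q.2 ^ 2)
      ((nsq p.2 • ((0 : EE n →L[ℝ] ℝ) - ∑ k, (p.1 k • cxm n k + p.1 k • cxm n k)) +
          (1 - nsq p.1) • ∑ k, (p.2 k • cym n k + p.2 k • cym n k)) +
        (dotp p.1 p.2 • ∑ k, (p.1 k • cym n k + p.2 k • cxm n k) +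
          dotp p.1 p.2 • ∑ k, (p.1 k • cym n k + p.2 k • cxm n k))) p := by
    refine HasFDerivAt.add ((hasC n p).mul hAd) ?_
    simp only [pow_two]
    exact (hasB n p).mul (hasB n p)
  have hFd := hdivR hNd hDd (pow_ne_zero 2 hA)
  -- values of partial derivatives
  have epdxP : ∀ k, pdx (fun q : (Fin n → ℝ) × (Fin n → ℝ) =>
      dotp q.1 q.2 / (1 - nsq q.1)) k p
      = (p.2 k * (1 - nsq p.1) + 2 * dotp p.1 p.2 * p.1 k) / (1 - nsq p.1) ^ 2 := by
    intro k
    rw [pdx, hPd.fderiv]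
    simp only [ContinuousLinearMap.add_apply, ContinuousLinearMap.sub_apply,
      ContinuousLinearMap.smul_apply, ContinuousLinearMap.sum_apply,
      ContinuousLinearMap.zero_apply, cxm_apply, cym_apply, smul_eq_mul,
      Pi.single_apply, Pi.zero_apply, mul_ite, ite_mul, mul_zero, zero_mul, mul_one,
      Finset.sum_ite_eq, Finset.sum_ite_eq', Finset.mem_univ, if_true, Finset.sum_add_distrib, add_zero,
      zero_add, Finset.sum_const_zero]
    field_simp
    ring
  have epdyP : ∀ k, pdy (fun q : (Fin n → ℝ) × (Fin n → ℝ) =>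
      dotp q.1 q.2 / (1 - nsq q.1)) k p = p.1 k / (1 - nsq p.1) := by
    intro k
    rw [pdy, hPd.fderiv]
    simp only [ContinuousLinearMap.add_apply, ContinuousLinearMap.sub_apply,
      ContinuousLinearMap.smul_apply, ContinuousLinearMap.sum_apply,
      ContinuousLinearMap.zero_apply, cxm_apply, cym_apply, smul_eq_mul,
      Pi.single_apply, Pi.zero_apply, mul_ite, ite_mul, mul_zero, zero_mul, mul_one,
      Finset.sum_ite_eq, Finset.sum_ite_eq', Finset.mem_univ, if_true, Finset.sum_add_distrib, add_zero,
      zero_add, Finset.sum_const_zero]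
    field_simp
    ring
  have epdxF : ∀ k, pdx (fun q : (Fin n → ℝ) × (Fin n → ℝ) =>
      (nsq q.2 * (1 - nsq q.1) + dotp q.1 q.2 ^ 2) / (1 - nsq q.1) ^ 2) k p
      = (2 * dotp p.1 p.2 * p.2 k * (1 - nsq p.1) + 2 * p.1 k * nsq p.2 * (1 - nsq p.1)
          + 4 * p.1 k * dotp p.1 p.2 ^ 2) / (1 - nsq p.1) ^ 3 := by
    intro k
    rw [pdx, hFd.fderiv]
    simp only [ContinuousLinearMap.add_apply, ContinuousLinearMap.sub_apply,
      ContinuousLinearMap.smul_apply, ContinuousLinearMap.sum_apply,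
      ContinuousLinearMap.zero_apply, cxm_apply, cym_apply, smul_eq_mul,
      Pi.single_apply, Pi.zero_apply, mul_ite, ite_mul, mul_zero, zero_mul, mul_one,
      Finset.sum_ite_eq, Finset.sum_ite_eq', Finset.mem_univ, if_true, Finset.sum_add_distrib, add_zero,
      zero_add, Finset.sum_const_zero]
    field_simp
    ring
  have epdyF : ∀ k, pdy (fun q : (Fin n → ℝ) × (Fin n → ℝ) =>
      (nsq q.2 * (1 - nsq q.1) + dotp q.1 q.2 ^ 2) / (1 - nsq q.1) ^ 2) k p
      = (2 * p.2 k * (1 - nsq p.1) + 2 * dotp p.1 p.2 * p.1 k) / (1 - nsq p.1) ^ 2 := by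
    intro k
    rw [pdy, hFd.fderiv]
    simp only [ContinuousLinearMap.add_apply, ContinuousLinearMap.sub_apply,
      ContinuousLinearMap.smul_apply, ContinuousLinearMap.sum_apply,
      ContinuousLinearMap.zero_apply, cxm_apply, cym_apply, smul_eq_mul,
      Pi.single_apply, Pi.zero_apply, mul_ite, ite_mul, mul_zero, zero_mul, mul_one,
      Finset.sum_ite_eq, Finset.sum_ite_eq', Finset.mem_univ, if_true, Finset.sum_add_distrib, add_zero,
      zero_add, Finset.sum_const_zero]
    field_simp
    ring
  have eN : ∀ j i : Fin n,
      Ncon (fun i (q : (Fin n → ℝ) × (Fin n → ℝ)) =>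
        dotp q.1 q.2 / (1 - nsq q.1) * q.2 i) j i p
      = dotp p.1 p.2 / (1 - nsq p.1) * (if j = i then 1 else 0)
        + p.2 j * (p.1 i / (1 - nsq p.1)) := by
    intro j i
    have hGd : HasFDerivAt (fun q : EE n => dotp q.1 q.2 / (1 - nsq q.1) * q.2 j)
        ((dotp p.1 p.2 / (1 - nsq p.1)) • cym n j + p.2 j •
          ((1 - nsq p.1)⁻¹ • ∑ k, (p.1 k • cym n k + p.2 k • cxm n k) +
            (-dotp p.1 p.2 / (1 - nsq p.1) ^ 2) •
              ((0 : EE n →L[ℝ] ℝ) - ∑ k, (p.1 k • cxm n k + p.1 k • cxm n k)))) p :=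
      hPd.mul (cym n j).hasFDerivAt
    rw [Ncon, pdy, hGd.fderiv]
    simp only [ContinuousLinearMap.add_apply, ContinuousLinearMap.sub_apply,
      ContinuousLinearMap.smul_apply, ContinuousLinearMap.sum_apply,
      ContinuousLinearMap.zero_apply, cxm_apply, cym_apply, smul_eq_mul,
      Pi.single_apply, Pi.zero_apply, mul_ite, ite_mul, mul_zero, zero_mul, mul_one,
      Finset.sum_ite_eq, Finset.sum_ite_eq', Finset.mem_univ, if_true, Finset.sum_add_distrib, add_zero,
      zero_add, Finset.sum_const_zero]
    rcases eq_or_ne j i with h | h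
    · subst h
      simp only [if_true]
      field_simp
      try ring
    · simp only [h, if_false]
      field_simp
      try ring
  constructor
  · -- ρ = -F²
    show (dotp p.1 p.2 / (1 - nsq p.1)) ^ 2 - flatOp _ p = -_
    simp only [flatOp, epdxP]
    have hsum1 : ∑ k, p.2 k *
        ((p.2 k * (1 - nsq p.1) + 2 * dotp p.1 p.2 * p.1 k) / (1 - nsq p.1) ^ 2)
        = (nsq p.2 * (1 - nsq p.1) + 2 * dotp p.1 p.2 ^ 2) / (1 - nsq p.1) ^ 2 := by
      have hterm : ∀ k : Fin n, p.2 k *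
          ((p.2 k * (1 - nsq p.1) + 2 * dotp p.1 p.2 * p.1 k) / (1 - nsq p.1) ^ 2)
          = (p.2 k ^ 2 * (1 - nsq p.1) + p.1 k * p.2 k * (2 * dotp p.1 p.2))
              / (1 - nsq p.1) ^ 2 := fun k => by ring
      rw [Finset.sum_congr rfl fun k _ => hterm k]
      rw [← Finset.sum_div, Finset.sum_add_distrib, ← Finset.sum_mul, ← Finset.sum_mul]
      rw [show (∑ k, p.2 k ^ 2) = nsq p.2 from rfl,
        show (∑ k, p.1 k * p.2 k) = dotp p.1 p.2 from rfl]
      ring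
    rw [hsum1]
    field_simp
    ring
  · -- d_h F² = 0
    intro i
    rw [epdxF i]
    simp only [eN, epdyF]
    have hterm := fun j => hterm_aux p.1 p.2 (1 - nsq p.1) (dotp p.1 p.2) hA i j
    rw [Finset.sum_congr rfl fun j _ => hterm j]
    rw [Finset.sum_add_distrib, Finset.sum_ite_eq' Finset.univ i, Finset.sum_add_distrib,
      ← Finset.sum_mul, ← Finset.sum_mul]
    rw [show (∑ k, p.2 k ^ 2) = nsq p.2 from rfl,
      show (∑ k, p.1 k * p.2 k) = dotp p.1 p.2 from rfl]
    simp only [Finset.mem_univ, if_true]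
    field_simp
    ring
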